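/- Assume Ĥ is invertible and let x_0 ∈ ℝⁿ. If u and v are both open-loop Nash equilibria of the stubborn delay-free game (costs J̃̂_i, initial state y_0 = x_0), then y_u(T) = y_v(T) = Ĥ⁻¹·( exp(TΛ)·x_0 + ∑_{j=1}^n Ψ_j·exp(τΛᵀ)·W_j·x_0 ) and, for every player i, u_i(t) = v_i(t) for almost every t ∈ [0,T]; i.e., the open-loop Nash equilibrium of the stubborn game is unique (up to null sets). -/

import Mathlib

open Matrix MeasureTheory
open scoped Matrix

noncomputable section

/-- The matrix exponential of a real `n × n` matrix. -/
def mexp {n : ℕ} (A : Matrix (Fin n) (Fin n) ℝ) : Matrix (Fin n) (Fin n) ℝ :=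
  NormedSpace.exp A

/-- An admissible control of the delayed game: a bounded measurable function `u : ℝ → ℝ`
with `u s = 0` for `s < 0`. -/
def AdmissibleD (u : ℝ → ℝ) : Prop :=
  Measurable u ∧ (∃ C, ∀ s, |u s| ≤ C) ∧ ∀ s < 0, u s = 0

/-- An admissible control of the delay-free game: a bounded measurable function. -/
def AdmissibleF (u : ℝ → ℝ) : Prop :=
  Measurable u ∧ ∃ C, ∀ s, |u s| ≤ C

/-- Data of the differential games of opinion formation: the system matrix `Λ`
(the continuous-time Hegselmann–Krause matrix `Λ = D⁻¹A − I`), the input delay `τ`,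
the terminal time `tf`, and for each player `i` the input vector `B i`, the control
weight `r i`, the neighborhood size `d i = |𝒩ᵢ|`, the agent-`i` graph Laplacian `L i`
and the stubbornness coefficient `ω i`. -/
structure GameData (n : ℕ) where
  Λ : Matrix (Fin n) (Fin n) ℝ
  τ : ℝ
  tf : ℝ
  B : Fin n → Fin n → ℝ
  r : Fin n → ℝ
  d : Fin n → ℝ
  L : Fin n → Matrix (Fin n) (Fin n) ℝ
  ω : Fin n → ℝ

namespace GameData

variable {n : ℕ} (G : GameData n)

/-- The standing hypotheses: `τ ≥ 0`, `t_f > τ`, `rᵢ > 0`, `dᵢ > 0`, each `Lᵢ` symmetric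
positive semidefinite, and `ωᵢ ∈ [0,1]`. -/
def Valid : Prop :=
  0 ≤ G.τ ∧ G.τ < G.tf ∧ (∀ i, 0 < G.r i) ∧ (∀ i, 0 < G.d i) ∧
    (∀ i, (G.L i).PosSemidef) ∧ ∀ i, G.ω i ∈ Set.Icc (0 : ℝ) 1

/-- `T = t_f − τ`. -/
def T : ℝ := G.tf - G.τ

/-- `B̂ᵢ = exp(−τΛ)·Bᵢ`. -/
def Bhat (i : Fin n) : Fin n → ℝ := (mexp ((-G.τ) • G.Λ)).mulVec (G.B i)

/-- `L̂ᵢ = exp(τΛᵀ)·Lᵢ·exp(τΛ)`. -/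
def Lhat (i : Fin n) : Matrix (Fin n) (Fin n) ℝ :=
  mexp (G.τ • G.Λᵀ) * G.L i * mexp (G.τ • G.Λ)

/-- `Sᵢ = (1/rᵢ)·B̂ᵢ·B̂ᵢᵀ`. -/
def S (i : Fin n) : Matrix (Fin n) (Fin n) ℝ :=
  (1 / G.r i) • vecMulVec (G.Bhat i) (G.Bhat i)

/-- The matrix `∫₀ᵗ exp((t−s)Λ)·Sᵢ·exp((T−s)Λᵀ) ds` (entrywise integral). -/
def Phi (T' : ℝ) (i : Fin n) (t : ℝ) : Matrix (Fin n) (Fin n) ℝ :=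
  Matrix.of fun a b =>
    ∫ s in (0:ℝ)..t, (mexp ((t - s) • G.Λ) * G.S i * mexp ((T' - s) • G.Λᵀ)) a b

/-- `Ψᵢ = ∫₀ᵀ exp((T−s)Λ)·Sᵢ·exp((T−s)Λᵀ) ds` with `T = t_f − τ`. -/
def Psi (i : Fin n) : Matrix (Fin n) (Fin n) ℝ := G.Phi G.T i G.T

/-- `H = I + ∑ⱼ (1/dⱼ)·Ψⱼ·L̂ⱼ`. -/
def H : Matrix (Fin n) (Fin n) ℝ :=
  1 + ∑ j : Fin n, (1 / G.d j) • (G.Psi j * G.Lhat j)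

/-- `Wᵢ`: the matrix whose `(i,i)` entry is `ωᵢ` and all other entries are `0`. -/
def W (i : Fin n) : Matrix (Fin n) (Fin n) ℝ := Matrix.single i i (G.ω i)

/-- `Ŵᵢ = exp(τΛᵀ)·Wᵢ·exp(τΛ)`. -/
def What (i : Fin n) : Matrix (Fin n) (Fin n) ℝ :=
  mexp (G.τ • G.Λᵀ) * G.W i * mexp (G.τ • G.Λ)

/-- `Ĥ = I + ∑ⱼ Ψⱼ·(Ŵⱼ + ((1−ωⱼ)/dⱼ)·L̂ⱼ)`. -/
def Hhat : Matrix (Fin n) (Fin n) ℝ :=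
  1 + ∑ j : Fin n, G.Psi j * (G.What j + ((1 - G.ω j) / G.d j) • G.Lhat j)

/-- The trajectory of the delayed game:
`x_u(t) = exp(tΛ)·x₀ + ∫₀ᵗ exp((t−s)Λ)·(∑ⱼ Bⱼ·uⱼ(s−τ)) ds`. -/
def xtraj (x0 : Fin n → ℝ) (u : Fin n → ℝ → ℝ) (t : ℝ) : Fin n → ℝ :=
  (mexp (t • G.Λ)).mulVec x0 +
    ∫ s in (0:ℝ)..t, (mexp ((t - s) • G.Λ)).mulVec (∑ j : Fin n, u j (s - G.τ) • G.B j)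

/-- The trajectory of the delay-free game:
`y_u(t) = exp(tΛ)·y₀ + ∫₀ᵗ exp((t−s)Λ)·(∑ⱼ B̂ⱼ·uⱼ(s)) ds`. -/
def ytraj (y0 : Fin n → ℝ) (u : Fin n → ℝ → ℝ) (t : ℝ) : Fin n → ℝ :=
  (mexp (t • G.Λ)).mulVec y0 +
    ∫ s in (0:ℝ)..t, (mexp ((t - s) • G.Λ)).mulVec (∑ j : Fin n, u j s • G.Bhat j)

/-- Player `i`'s cost in the delayed game:
`Jᵢ(u) = (1/dᵢ)·x_u(t_f)ᵀ·Lᵢ·x_u(t_f) + ∫₀^{t_f} rᵢ·uᵢ(t−τ)² dt`. -/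
def J (x0 : Fin n → ℝ) (i : Fin n) (u : Fin n → ℝ → ℝ) : ℝ :=
  (1 / G.d i) * (G.xtraj x0 u G.tf ⬝ᵥ (G.L i).mulVec (G.xtraj x0 u G.tf)) +
    ∫ t in (0:ℝ)..G.tf, G.r i * u i (t - G.τ) ^ 2

/-- Player `i`'s cost in the delay-free game:
`Ĵᵢ(u) = (1/dᵢ)·y_u(T)ᵀ·L̂ᵢ·y_u(T) + ∫₀ᵀ rᵢ·uᵢ(t)² dt`. -/
def JF (y0 : Fin n → ℝ) (i : Fin n) (u : Fin n → ℝ → ℝ) : ℝ :=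
  (1 / G.d i) * (G.ytraj y0 u G.T ⬝ᵥ (G.Lhat i).mulVec (G.ytraj y0 u G.T)) +
    ∫ t in (0:ℝ)..G.T, G.r i * u i t ^ 2

/-- Player `i`'s stubborn cost in the delayed game. -/
def Jstub (x0 : Fin n → ℝ) (i : Fin n) (u : Fin n → ℝ → ℝ) : ℝ :=
  (G.xtraj x0 u G.tf - x0) ⬝ᵥ (G.W i).mulVec (G.xtraj x0 u G.tf - x0) +
    ((1 - G.ω i) / G.d i) * (G.xtraj x0 u G.tf ⬝ᵥ (G.L i).mulVec (G.xtraj x0 u G.tf)) +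
    ∫ t in (0:ℝ)..G.tf, G.r i * u i (t - G.τ) ^ 2

/-- Player `i`'s stubborn cost in the delay-free game, with reference opinion `x₀`. -/
def JstubF (x0 y0 : Fin n → ℝ) (i : Fin n) (u : Fin n → ℝ → ℝ) : ℝ :=
  ((mexp (G.τ • G.Λ)).mulVec (G.ytraj y0 u G.T) - x0) ⬝ᵥ
      (G.W i).mulVec ((mexp (G.τ • G.Λ)).mulVec (G.ytraj y0 u G.T) - x0) +
    ((1 - G.ω i) / G.d i) * (G.ytraj y0 u G.T ⬝ᵥ (G.Lhat i).mulVec (G.ytraj y0 u G.T)) +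
    ∫ t in (0:ℝ)..G.T, G.r i * u i t ^ 2

/-- Open-loop Nash equilibrium of the delayed game. -/
def NashD (x0 : Fin n → ℝ) (u : Fin n → ℝ → ℝ) : Prop :=
  (∀ i, AdmissibleD (u i)) ∧
    ∀ i, ∀ v : ℝ → ℝ, AdmissibleD v →
      G.J x0 i u ≤ G.J x0 i (Function.update u i v)

/-- Open-loop Nash equilibrium of the delay-free game. -/
def NashF (y0 : Fin n → ℝ) (u : Fin n → ℝ → ℝ) : Prop :=
  (∀ i, AdmissibleF (u i)) ∧
    ∀ i, ∀ v : ℝ → ℝ, AdmissibleF v →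
      G.JF y0 i u ≤ G.JF y0 i (Function.update u i v)

/-- Open-loop Nash equilibrium of the stubborn delayed game. -/
def NashStubD (x0 : Fin n → ℝ) (u : Fin n → ℝ → ℝ) : Prop :=
  (∀ i, AdmissibleD (u i)) ∧
    ∀ i, ∀ v : ℝ → ℝ, AdmissibleD v →
      G.Jstub x0 i u ≤ G.Jstub x0 i (Function.update u i v)

/-- Open-loop Nash equilibrium of the stubborn delay-free game. -/
def NashStubF (x0 y0 : Fin n → ℝ) (u : Fin n → ℝ → ℝ) : Prop :=
  (∀ i, AdmissibleF (u i)) ∧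
    ∀ i, ∀ v : ℝ → ℝ, AdmissibleF v →
      G.JstubF x0 y0 i u ≤ G.JstubF x0 y0 i (Function.update u i v)

end GameData
section Helpers
variable {n : ℕ}

lemma aux_eq_zero (A Q : ℝ) (h : ∀ ε : ℝ, 0 ≤ ε * A + ε ^ 2 * Q) : A = 0 := by
  by_contra hA
  set c : ℝ := (|Q| + 1)⁻¹ with hc
  have hQ0 : (0:ℝ) < |Q| + 1 := by positivity
  have hcpos : 0 < c := inv_pos.mpr hQ0
  have hc1 : c * (|Q| + 1) = 1 := inv_mul_cancel₀ (ne_of_gt hQ0)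
  have hQ : Q ≤ |Q| := le_abs_self Q
  have hcQ : c * Q - 1 < 0 := by nlinarith
  have hA2 : 0 < A ^ 2 := by positivity
  have h1 := h (-A * c)
  nlinarith [mul_pos hA2 hcpos]

lemma intInt_of_bdd {V : Type*} [NormedAddCommGroup V] {a b : ℝ} (f : ℝ → V)
    (hf : AEStronglyMeasurable f volume) (C : ℝ) (h : ∀ s ∈ Set.uIcc a b, ‖f s‖ ≤ C) :
    IntervalIntegrable f volume a b := by
  rw [intervalIntegrable_iff]
  haveI : IsFiniteMeasure (volume.restrict (Set.uIoc a b)) :=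
    ⟨by rw [Measure.restrict_apply_univ]; exact measure_Ioc_lt_top⟩
  refine Integrable.mono' (integrable_const C) hf.restrict ?_
  rw [ae_restrict_iff' measurableSet_uIoc]
  filter_upwards with s hs
  exact h s (Set.uIoc_subset_uIcc hs)

lemma intInt_smul {V : Type*} [NormedAddCommGroup V] [NormedSpace ℝ V] {a b : ℝ}
    (f : ℝ → ℝ) (hf : Measurable f) (C : ℝ) (hC : ∀ s, |f s| ≤ C)
    (g : ℝ → V) (hg : Continuous g) :
    IntervalIntegrable (fun s => f s • g s) volume a b := by
  obtain ⟨M, hM⟩ := (isCompact_uIcc (a := a) (b := b)).exists_bound_of_continuousOn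
    hg.continuousOn
  refine intInt_of_bdd _ (hf.aestronglyMeasurable.smul hg.aestronglyMeasurable) (C * M) ?_
  intro s hs
  calc ‖f s • g s‖ = |f s| * ‖g s‖ := by rw [norm_smul]; rfl
    _ ≤ C * M := mul_le_mul (hC s) (hM s hs) (norm_nonneg _) ((abs_nonneg _).trans (hC s))

lemma intInt_mul {a b : ℝ} (f g : ℝ → ℝ) (hf : Measurable f) (hg : Measurable g)
    (C D : ℝ) (hC : ∀ s, |f s| ≤ C) (hD : ∀ s, |g s| ≤ D) :
    IntervalIntegrable (fun s => f s * g s) volume a b := by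
  refine intInt_of_bdd _ (hf.aestronglyMeasurable.mul hg.aestronglyMeasurable) (C * D) ?_
  intro s _
  calc ‖f s * g s‖ = |f s| * |g s| := abs_mul _ _
    _ ≤ C * D := mul_le_mul (hC s) (hD s) (abs_nonneg _) ((abs_nonneg _).trans (hC s))

lemma integral_dot {a b : ℝ} (f : ℝ → Fin n → ℝ) (hf : IntervalIntegrable f volume a b)
    (m : Fin n → ℝ) : (∫ s in a..b, f s) ⬝ᵥ m = ∫ s in a..b, f s ⬝ᵥ m := by
  let L : (Fin n → ℝ) →ₗ[ℝ] ℝ :=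
    { toFun := fun x => x ⬝ᵥ m
      map_add' := fun x y => add_dotProduct x y m
      map_smul' := fun c x => smul_dotProduct c x m }
  exact (ContinuousLinearMap.intervalIntegral_comp_comm
    (LinearMap.toContinuousLinearMap L) hf).symm

lemma integral_mulVec {a b : ℝ} (M : Matrix (Fin n) (Fin n) ℝ) (f : ℝ → Fin n → ℝ)
    (hf : IntervalIntegrable f volume a b) :
    M *ᵥ (∫ s in a..b, f s) = ∫ s in a..b, M *ᵥ f s := by
  exact (ContinuousLinearMap.intervalIntegral_comp_comm
    (LinearMap.toContinuousLinearMap M.mulVecLin) hf).symm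

lemma integral_apply' {a b : ℝ} (f : ℝ → Fin n → ℝ) (hf : IntervalIntegrable f volume a b)
    (j : Fin n) : (∫ s in a..b, f s) j = ∫ s in a..b, f s j :=
  (ContinuousLinearMap.intervalIntegral_comp_comm
    (ContinuousLinearMap.proj (R := ℝ) (φ := fun _ : Fin n => ℝ) j) hf).symm

lemma sum_mulVec' {ι : Type*} (s : Finset ι) (f : ι → Matrix (Fin n) (Fin n) ℝ)
    (x : Fin n → ℝ) : (∑ j ∈ s, f j) *ᵥ x = ∑ j ∈ s, f j *ᵥ x := by
  classical
  induction s using Finset.induction_on with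
  | empty => simp
  | insert _ _ hx ih => rw [Finset.sum_insert hx, Finset.sum_insert hx, Matrix.add_mulVec, ih]

lemma vecMulVec_mulVec' (x y z : Fin n → ℝ) : (vecMulVec x y) *ᵥ z = (y ⬝ᵥ z) • x := by
  funext a
  simp only [Matrix.vecMulVec_apply, Matrix.mulVec, dotProduct, Pi.smul_apply,
    smul_eq_mul]
  rw [Finset.sum_mul]
  exact Finset.sum_congr rfl fun b _ => by ring

lemma stdBasis_transpose (i : Fin n) (c : ℝ) :
    (Matrix.single i i c)ᵀ = Matrix.single i i c := by
  ext a b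
  simp [Matrix.single_apply, Matrix.transpose_apply, and_comm]

lemma mulVec_dot (M : Matrix (Fin n) (Fin n) ℝ) (x y : Fin n → ℝ) :
    (M *ᵥ x) ⬝ᵥ y = x ⬝ᵥ (Mᵀ *ᵥ y) := by
  rw [Matrix.dotProduct_mulVec, Matrix.vecMul_transpose, dotProduct_comm,
    Matrix.dotProduct_mulVec]

end Helpers
section Game
open intervalIntegral
variable {n : ℕ} (G : GameData n)

/-- `exp((T-t)Λ)`. -/
def EE (t : ℝ) : Matrix (Fin n) (Fin n) ℝ := mexp ((G.T - t) • G.Λ)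

/-- `exp((T-t)Λ)·B̂ᵢ`. -/
def bb (i : Fin n) (t : ℝ) : Fin n → ℝ := (EE G t).mulVec (G.Bhat i)

/-- The costate-type vector `mᵢ`. -/
def mv (x0 y : Fin n → ℝ) (i : Fin n) : Fin n → ℝ :=
  (mexp (G.τ • G.Λ))ᵀ *ᵥ ((G.W i) *ᵥ ((mexp (G.τ • G.Λ)) *ᵥ y - x0)) +
    ((1 - G.ω i) / G.d i) • ((G.Lhat i) *ᵥ y)

lemma mexp_transpose' (c : ℝ) : mexp (c • G.Λᵀ) = (mexp (c • G.Λ))ᵀ := by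
  rw [show c • G.Λᵀ = (c • G.Λ)ᵀ from (Matrix.transpose_smul c G.Λ).symm]
  exact Matrix.exp_transpose _

lemma exp_cont : Continuous fun A : Matrix (Fin n) (Fin n) ℝ => NormedSpace.exp A := by
  letI : SeminormedRing (Matrix (Fin n) (Fin n) ℝ) := Matrix.linftyOpSemiNormedRing
  letI : NormedRing (Matrix (Fin n) (Fin n) ℝ) := Matrix.linftyOpNormedRing
  letI : NormedAlgebra ℝ (Matrix (Fin n) (Fin n) ℝ) := Matrix.linftyOpNormedAlgebra
  let +nondep : NormedAlgebra ℚ (Matrix (Fin n) (Fin n) ℝ) := .restrictScalars ℚ ℝ _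
  exact NormedSpace.exp_continuous

lemma contEE : Continuous (EE G) := by
  unfold EE mexp
  exact exp_cont.comp (((continuous_const.sub continuous_id).smul continuous_const))

lemma contbb (i : Fin n) : Continuous (bb G i) := by
  let L : Matrix (Fin n) (Fin n) ℝ →ₗ[ℝ] (Fin n → ℝ) :=
    { toFun := fun M => M *ᵥ (G.Bhat i)
      map_add' := fun A B => Matrix.add_mulVec A B _
      map_smul' := fun c A => Matrix.smul_mulVec c A _ }
  exact (L.continuous_of_finiteDimensional).comp (contEE G)

lemma hT_pos (hG : G.Valid) : 0 < G.T := sub_pos.mpr hG.2.1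

lemma ytraj_eq (x0 : Fin n → ℝ) (u : Fin n → ℝ → ℝ) :
    G.ytraj x0 u G.T = (mexp (G.T • G.Λ)) *ᵥ x0 +
      ∫ s in (0:ℝ)..G.T, ∑ j, u j s • bb G j s := by
  unfold GameData.ytraj
  congr 1
  refine intervalIntegral.integral_congr fun s _ => ?_
  rw [show (∑ j, u j s • G.Bhat j) = ∑ j, u j s • G.Bhat j from rfl,
    show (mexp ((G.T - s) • G.Λ)) *ᵥ (∑ j, u j s • G.Bhat j)
      = ∑ j, (mexp ((G.T - s) • G.Λ)) *ᵥ (u j s • G.Bhat j) from by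
        simp only [← Matrix.mulVecLin_apply]
        exact map_sum (mexp ((G.T - s) • G.Λ)).mulVecLin
          (fun j => u j s • G.Bhat j) Finset.univ]
  exact Finset.sum_congr rfl fun j _ => Matrix.mulVec_smul _ _ _

end Game
section Game2
open intervalIntegral
variable {n : ℕ} (G : GameData n)

lemma intInt_hbb (f : ℝ → ℝ) (hf : AdmissibleF f) (i : Fin n) (a b : ℝ) :
    IntervalIntegrable (fun s => f s • bb G i s) volume a b := by
  obtain ⟨hm, C, hC⟩ := hf
  exact intInt_smul f hm C hC _ (contbb G i)

lemma intInt_sumbb (u : Fin n → ℝ → ℝ) (hu : ∀ j, AdmissibleF (u j)) (a b : ℝ) :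
    IntervalIntegrable (fun s => ∑ j, u j s • bb G j s) volume a b := by
  have : ∀ (t : Finset (Fin n)), IntervalIntegrable (fun s => ∑ j ∈ t, u j s • bb G j s) volume a b := by
    intro t
    classical
    induction t using Finset.induction_on with
    | empty => simpa using intervalIntegrable_const (c := (0 : Fin n → ℝ))
    | @insert j t hj ih =>
      have := (intInt_hbb G (u j) (hu j) j a b).add ih
      simpa [Finset.sum_insert hj] using this
  exact this Finset.univ

lemma admissible_sub (f g : ℝ → ℝ) (hf : AdmissibleF f) (hg : AdmissibleF g) :
    AdmissibleF (fun s => f s - g s) := by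
  obtain ⟨hfm, C, hC⟩ := hf; obtain ⟨hgm, D, hD⟩ := hg
  exact ⟨hfm.sub hgm, C + D, fun s => (abs_sub _ _).trans (add_le_add (hC s) (hD s))⟩

lemma ytraj_update (x0 : Fin n → ℝ) (u : Fin n → ℝ → ℝ) (hu : ∀ j, AdmissibleF (u j))
    (i : Fin n) (w : ℝ → ℝ) (hw : AdmissibleF w) :
    G.ytraj x0 (Function.update u i w) G.T
      = G.ytraj x0 u G.T + ∫ s in (0:ℝ)..G.T, (w s - u i s) • bb G i s := by
  rw [ytraj_eq, ytraj_eq, add_assoc]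
  congr 1
  have hpt : ∀ s, (∑ j, (Function.update u i w) j s • bb G j s)
      = (∑ j, u j s • bb G j s) + (w s - u i s) • bb G i s := by
    intro s
    have hι : (w s - u i s) • bb G i s
        = ∑ j, if j = i then (w s - u i s) • bb G i s else (0 : Fin n → ℝ) := by
      rw [Finset.sum_ite_eq' Finset.univ i fun _ => (w s - u i s) • bb G i s]
      simp
    rw [hι, ← Finset.sum_add_distrib]
    refine Finset.sum_congr rfl fun j _ => ?_
    by_cases hj : j = i
    · subst hj
      simp only [Function.update_self, eq_self_iff_true, if_true]
      rw [sub_smul, add_sub_cancel]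
    · simp [Function.update_of_ne hj, hj]
  rw [intervalIntegral.integral_congr (fun s _ => hpt s),
    intervalIntegral.integral_add (intInt_sumbb G u hu 0 G.T)
      (intInt_hbb G _ (admissible_sub w (u i) hw (hu i)) i 0 G.T)]

end Game2
section Game3
open intervalIntegral
variable {n : ℕ} (G : GameData n)

lemma cont_dot {f : ℝ → Fin n → ℝ} (hf : Continuous f) (m : Fin n → ℝ) :
    Continuous fun s => f s ⬝ᵥ m := by
  show Continuous fun s => ∑ k, f s k * m k
  exact continuous_finset_sum _ fun k _ =>
    ((continuous_apply k).comp hf).mul continuous_const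

lemma quad_expand (M : Matrix (Fin n) (Fin n) ℝ) (hM : Mᵀ = M) (ε : ℝ) (a b : Fin n → ℝ) :
    (a + ε • b) ⬝ᵥ (M *ᵥ (a + ε • b))
      = a ⬝ᵥ (M *ᵥ a) + ε * (2 * (b ⬝ᵥ (M *ᵥ a))) + ε ^ 2 * (b ⬝ᵥ (M *ᵥ b)) := by
  have hba : a ⬝ᵥ (M *ᵥ b) = b ⬝ᵥ (M *ᵥ a) := by
    rw [dotProduct_comm a (M *ᵥ b), mulVec_dot M b a, hM]
  simp only [Matrix.mulVec_add, Matrix.mulVec_smul, dotProduct_add,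
    add_dotProduct, dotProduct_smul, smul_dotProduct, smul_eq_mul]
  rw [hba]; ring

lemma Wsym (i : Fin n) : (G.W i)ᵀ = G.W i := by
  simp only [GameData.W]; exact stdBasis_transpose i (G.ω i)

lemma Lsym (hG : G.Valid) (i : Fin n) : (G.Lhat i)ᵀ = G.Lhat i := by
  have hL : (G.L i)ᵀ = G.L i := by
    have h := (hG.2.2.2.2.1 i).isHermitian
    rwa [Matrix.IsHermitian, Matrix.conjTranspose_eq_transpose_of_trivial] at h
  have e1 : (mexp (G.τ • G.Λ))ᵀ = mexp (G.τ • G.Λᵀ) := (mexp_transpose' _ _).symm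
  have e2 : (mexp (G.τ • G.Λᵀ))ᵀ = mexp (G.τ • G.Λ) := by
    rw [mexp_transpose']; exact Matrix.transpose_transpose _
  rw [GameData.Lhat, Matrix.transpose_mul, Matrix.transpose_mul, hL, e1, e2,
    Matrix.mul_assoc]

lemma cost_expand (x0 : Fin n → ℝ) (u : Fin n → ℝ → ℝ) (hadm : ∀ j, AdmissibleF (u j))
    (hG : G.Valid) (i : Fin n) (h : ℝ → ℝ) (hh : AdmissibleF h) (ε : ℝ) :
    G.JstubF x0 x0 i (Function.update u i (fun s => u i s + ε * h s))
      = G.JstubF x0 x0 i u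
        + ε * (2 * ((∫ s in (0:ℝ)..G.T, h s • bb G i s) ⬝ᵥ mv G x0 (G.ytraj x0 u G.T) i)
                + 2 * G.r i * ∫ t in (0:ℝ)..G.T, u i t * h t)
        + ε ^ 2 * ((mexp (G.τ • G.Λ) *ᵥ (∫ s in (0:ℝ)..G.T, h s • bb G i s)) ⬝ᵥ
              (G.W i *ᵥ (mexp (G.τ • G.Λ) *ᵥ (∫ s in (0:ℝ)..G.T, h s • bb G i s)))
            + ((1 - G.ω i) / G.d i) * ((∫ s in (0:ℝ)..G.T, h s • bb G i s) ⬝ᵥ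
                (G.Lhat i *ᵥ (∫ s in (0:ℝ)..G.T, h s • bb G i s)))
            + G.r i * ∫ t in (0:ℝ)..G.T, h t * h t) := by
  obtain ⟨hum, Cu, hCu⟩ := hadm i
  obtain ⟨hhm, Ch, hCh⟩ := hh
  have hwadm : AdmissibleF (fun s => u i s + ε * h s) :=
    ⟨hum.add (measurable_const.mul hhm), Cu + |ε| * Ch, fun s => by
      calc |u i s + ε * h s| ≤ |u i s| + |ε * h s| := abs_add_le _ _
        _ ≤ Cu + |ε| * Ch := by
            rw [abs_mul]
            exact add_le_add (hCu s) (mul_le_mul_of_nonneg_left (hCh s) (abs_nonneg ε))⟩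
  have htraj : G.ytraj x0 (Function.update u i (fun s => u i s + ε * h s)) G.T
      = G.ytraj x0 u G.T + ε • ∫ s in (0:ℝ)..G.T, h s • bb G i s := by
    rw [ytraj_update G x0 u hadm i _ hwadm]
    congr 1
    rw [← intervalIntegral.integral_smul]
    refine intervalIntegral.integral_congr fun s _ => ?_
    show (u i s + ε * h s - u i s) • bb G i s = ε • (h s • bb G i s)
    rw [smul_smul]
    congr 1
    ring
  -- integrability of scalar pieces
  have hint_uu : IntervalIntegrable (fun t => u i t * u i t) volume 0 G.T :=
    intInt_mul _ _ hum hum Cu Cu hCu hCu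
  have hint_uh : IntervalIntegrable (fun t => u i t * h t) volume 0 G.T :=
    intInt_mul _ _ hum hhm Cu Ch hCu hCh
  have hint_hh : IntervalIntegrable (fun t => h t * h t) volume 0 G.T :=
    intInt_mul _ _ hhm hhm Ch Ch hCh hCh
  have hsq : (∫ t in (0:ℝ)..G.T, G.r i * (u i t + ε * h t) ^ 2)
      = (∫ t in (0:ℝ)..G.T, G.r i * u i t ^ 2)
        + ε * (2 * G.r i * ∫ t in (0:ℝ)..G.T, u i t * h t)
        + ε ^ 2 * (G.r i * ∫ t in (0:ℝ)..G.T, h t * h t) := by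
    have hptw : ∀ t, G.r i * (u i t + ε * h t) ^ 2
        = G.r i * (u i t * u i t) + (ε * (2 * G.r i)) * (u i t * h t)
          + (ε ^ 2 * G.r i) * (h t * h t) := fun t => by ring
    rw [intervalIntegral.integral_congr fun t _ => hptw t,
      intervalIntegral.integral_add ((hint_uu.const_mul _).add
        (hint_uh.const_mul _)) (hint_hh.const_mul _),
      intervalIntegral.integral_add (hint_uu.const_mul _) (hint_uh.const_mul _),
      intervalIntegral.integral_const_mul, intervalIntegral.integral_const_mul,
      intervalIntegral.integral_const_mul]
    have : (∫ t in (0:ℝ)..G.T, G.r i * u i t ^ 2)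
        = G.r i * ∫ t in (0:ℝ)..G.T, u i t * u i t := by
      rw [← intervalIntegral.integral_const_mul]
      exact intervalIntegral.integral_congr fun t _ => by ring
    rw [this]; ring
  simp only [GameData.JstubF, htraj, Function.update_self]
  rw [show mexp (G.τ • G.Λ) *ᵥ (G.ytraj x0 u G.T + ε • ∫ s in (0:ℝ)..G.T, h s • bb G i s)
        - x0
      = (mexp (G.τ • G.Λ) *ᵥ G.ytraj x0 u G.T - x0)
        + ε • (mexp (G.τ • G.Λ) *ᵥ ∫ s in (0:ℝ)..G.T, h s • bb G i s) from by
    rw [Matrix.mulVec_add, Matrix.mulVec_smul]; abel]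
  rw [quad_expand (G.W i) (Wsym G i) ε _ _, quad_expand (G.Lhat i) (Lsym G hG i) ε _ _,
    hsq]
  have hq1 : (mexp (G.τ • G.Λ) *ᵥ ∫ s in (0:ℝ)..G.T, h s • bb G i s) ⬝ᵥ
        (G.W i *ᵥ (mexp (G.τ • G.Λ) *ᵥ G.ytraj x0 u G.T - x0))
      = (∫ s in (0:ℝ)..G.T, h s • bb G i s) ⬝ᵥ
        ((mexp (G.τ • G.Λ))ᵀ *ᵥ (G.W i *ᵥ (mexp (G.τ • G.Λ) *ᵥ G.ytraj x0 u G.T - x0))) :=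
    mulVec_dot _ _ _
  have hmv : (∫ s in (0:ℝ)..G.T, h s • bb G i s) ⬝ᵥ mv G x0 (G.ytraj x0 u G.T) i
      = (∫ s in (0:ℝ)..G.T, h s • bb G i s) ⬝ᵥ
          ((mexp (G.τ • G.Λ))ᵀ *ᵥ (G.W i *ᵥ (mexp (G.τ • G.Λ) *ᵥ G.ytraj x0 u G.T - x0)))
        + ((1 - G.ω i) / G.d i) *
          ((∫ s in (0:ℝ)..G.T, h s • bb G i s) ⬝ᵥ (G.Lhat i *ᵥ G.ytraj x0 u G.T)) := by
    simp only [mv, dotProduct_add, dotProduct_smul, smul_eq_mul]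
  rw [hq1, hmv]
  ring
end Game3
section Game4
open intervalIntegral
variable {n : ℕ} (G : GameData n)

lemma first_order (hG : G.Valid) (x0 : Fin n → ℝ) (u : Fin n → ℝ → ℝ)
    (hu : G.NashStubF x0 x0 u) (i : Fin n) (h : ℝ → ℝ) (hh : AdmissibleF h) :
    ∫ s in (0:ℝ)..G.T, h s * (G.r i * u i s + bb G i s ⬝ᵥ mv G x0 (G.ytraj x0 u G.T) i)
      = 0 := by
  obtain ⟨hadm, hne⟩ := hu
  obtain ⟨hum, Cu, hCu⟩ := hadm i
  obtain ⟨hhm, Ch, hCh⟩ := hh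
  have hA0 : 2 * ((∫ s in (0:ℝ)..G.T, h s • bb G i s) ⬝ᵥ mv G x0 (G.ytraj x0 u G.T) i)
      + 2 * G.r i * (∫ t in (0:ℝ)..G.T, u i t * h t) = 0 := by
    apply aux_eq_zero _
      ((mexp (G.τ • G.Λ) *ᵥ (∫ s in (0:ℝ)..G.T, h s • bb G i s)) ⬝ᵥ
          (G.W i *ᵥ (mexp (G.τ • G.Λ) *ᵥ (∫ s in (0:ℝ)..G.T, h s • bb G i s)))
        + ((1 - G.ω i) / G.d i) * ((∫ s in (0:ℝ)..G.T, h s • bb G i s) ⬝ᵥ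
            (G.Lhat i *ᵥ (∫ s in (0:ℝ)..G.T, h s • bb G i s)))
        + G.r i * ∫ t in (0:ℝ)..G.T, h t * h t)
    intro ε
    have hwadm : AdmissibleF (fun s => u i s + ε * h s) :=
      ⟨hum.add (measurable_const.mul hhm), Cu + |ε| * Ch, fun s => by
        calc |u i s + ε * h s| ≤ |u i s| + |ε * h s| := abs_add_le _ _
          _ ≤ Cu + |ε| * Ch := by
              rw [abs_mul]
              exact add_le_add (hCu s) (mul_le_mul_of_nonneg_left (hCh s) (abs_nonneg ε))⟩
    have hle := hne i _ hwadm
    rw [cost_expand G x0 u hadm hG i h ⟨hhm, Ch, hCh⟩ ε] at hle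
    linarith
  have hhb : IntervalIntegrable (fun s => h s • bb G i s) volume 0 G.T :=
    intInt_hbb G h ⟨hhm, Ch, hCh⟩ i 0 G.T
  have hPdot : (∫ s in (0:ℝ)..G.T, h s • bb G i s) ⬝ᵥ mv G x0 (G.ytraj x0 u G.T) i
      = ∫ s in (0:ℝ)..G.T, h s * (bb G i s ⬝ᵥ mv G x0 (G.ytraj x0 u G.T) i) := by
    rw [integral_dot _ hhb]
    exact intervalIntegral.integral_congr fun s _ => by
      simp [smul_dotProduct]
  have hcont : Continuous fun s => bb G i s ⬝ᵥ mv G x0 (G.ytraj x0 u G.T) i :=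
    cont_dot (contbb G i) _
  have hint1 : IntervalIntegrable
      (fun s => h s * (bb G i s ⬝ᵥ mv G x0 (G.ytraj x0 u G.T) i)) volume 0 G.T := by
    have := intInt_smul (a := 0) (b := G.T) h hhm Ch hCh _ hcont
    simpa [smul_eq_mul] using this
  have hint2 : IntervalIntegrable (fun s => G.r i * (u i s * h s)) volume 0 G.T :=
    (intInt_mul _ _ hum hhm Cu Ch hCu hCh).const_mul _
  have hsplit : (∫ s in (0:ℝ)..G.T,
        h s * (G.r i * u i s + bb G i s ⬝ᵥ mv G x0 (G.ytraj x0 u G.T) i))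
      = G.r i * (∫ t in (0:ℝ)..G.T, u i t * h t)
        + ∫ s in (0:ℝ)..G.T, h s * (bb G i s ⬝ᵥ mv G x0 (G.ytraj x0 u G.T) i) := by
    rw [intervalIntegral.integral_congr (g := fun s =>
        G.r i * (u i s * h s) + h s * (bb G i s ⬝ᵥ mv G x0 (G.ytraj x0 u G.T) i))
        (fun s _ => by ring),
      intervalIntegral.integral_add hint2 hint1, intervalIntegral.integral_const_mul]
  rw [hsplit, ← hPdot]
  linarith
end Game4
section Game5
open intervalIntegral
variable {n : ℕ} (G : GameData n)

lemma ae_formula (hG : G.Valid) (x0 : Fin n → ℝ) (u : Fin n → ℝ → ℝ)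
    (hu : G.NashStubF x0 x0 u) (i : Fin n) :
    ∀ᵐ t ∂(volume.restrict (Set.Ioc (0:ℝ) G.T)),
      u i t = -(1 / G.r i) * (bb G i t ⬝ᵥ mv G x0 (G.ytraj x0 u G.T) i) := by
  have hum := (hu.1 i).1
  obtain ⟨_, Cu, hCu⟩ := hu.1 i
  have hcont : Continuous fun s => bb G i s ⬝ᵥ mv G x0 (G.ytraj x0 u G.T) i :=
    cont_dot (contbb G i) _
  set g : ℝ → ℝ :=
    fun s => G.r i * u i s + bb G i s ⬝ᵥ mv G x0 (G.ytraj x0 u G.T) i with hgdef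
  have hgm : Measurable g := (measurable_const.mul hum).add hcont.measurable
  set h : ℝ → ℝ := fun s => if 0 ≤ g s then (1:ℝ) else -1 with hhdef
  have hhadm : AdmissibleF h := by
    refine ⟨Measurable.ite (measurableSet_le measurable_const hgm)
      measurable_const measurable_const, 1, fun s => ?_⟩
    by_cases h0 : 0 ≤ g s <;> simp [hhdef, h0]
  have hzero := first_order G hG x0 u hu i h hhadm
  have habs : ∀ s, h s * g s = |g s| := fun s => by
    by_cases h0 : 0 ≤ g s
    · simp [hhdef, h0, abs_of_nonneg h0]
    · simp [hhdef, h0]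
      rw [abs_of_neg (lt_of_not_ge h0)]
  have hTnn : (0:ℝ) ≤ G.T := le_of_lt (hT_pos G hG)
  have hgint : IntervalIntegrable g volume 0 G.T := by
    have h1 : IntervalIntegrable (fun s => G.r i * u i s) volume 0 G.T :=
      (intInt_of_bdd _ hum.aestronglyMeasurable Cu fun s _ => by
        simpa [Real.norm_eq_abs] using hCu s).const_mul _
    exact h1.add (hcont.intervalIntegrable 0 G.T)
  have hzero' : ∫ s in Set.Ioc (0:ℝ) G.T, |g s| = 0 := by
    rw [← intervalIntegral.integral_of_le hTnn]
    rw [← intervalIntegral.integral_congr fun s _ => habs s]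
    exact hzero
  have hint : Integrable (fun s => |g s|) (volume.restrict (Set.Ioc 0 G.T)) := by
    have := hgint.abs
    rwa [intervalIntegrable_iff, Set.uIoc_of_le hTnn] at this
  have h0 : (fun s => |g s|) =ᵐ[volume.restrict (Set.Ioc (0:ℝ) G.T)] 0 := by
    refine (MeasureTheory.integral_eq_zero_iff_of_nonneg_ae ?_ hint).mp hzero'
    filter_upwards with s using abs_nonneg (g s)
  filter_upwards [h0] with t ht
  have hgt : g t = 0 := abs_eq_zero.mp ht
  have hr : G.r i ≠ 0 := ne_of_gt (hG.2.2.1 i)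
  have : G.r i * u i t = -(bb G i t ⬝ᵥ mv G x0 (G.ytraj x0 u G.T) i) := by
    rw [hgdef] at hgt; simp only at hgt; linarith
  field_simp
  linarith
end Game5
section Game6
open intervalIntegral
variable {n : ℕ} (G : GameData n)

/-- The integrand matrix of `Ψⱼ`. -/
def MM (j : Fin n) (s : ℝ) : Matrix (Fin n) (Fin n) ℝ :=
  mexp ((G.T - s) • G.Λ) * G.S j * mexp ((G.T - s) • G.Λᵀ)

lemma MM_eq (j : Fin n) (s : ℝ) : MM G j s = EE G s * G.S j * (EE G s)ᵀ := by
  rw [MM, EE, mexp_transpose']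

lemma contMM (j : Fin n) : Continuous (MM G j) := by
  have : Continuous fun s => EE G s * G.S j * (EE G s)ᵀ :=
    ((contEE G).matrix_mul continuous_const).matrix_mul (contEE G).matrix_transpose
  simpa [funext fun s => MM_eq G j s] using this

lemma MM_mulVec (j : Fin n) (s : ℝ) (m : Fin n → ℝ) :
    MM G j s *ᵥ m = (1 / G.r j) • ((bb G j s ⬝ᵥ m) • bb G j s) := by
  rw [MM_eq, ← Matrix.mulVec_mulVec, ← Matrix.mulVec_mulVec, GameData.S,
    Matrix.smul_mulVec, vecMulVec_mulVec', ← mulVec_dot (EE G s) (G.Bhat j) m,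
    Matrix.mulVec_smul, Matrix.mulVec_smul]
  rfl

lemma Psi_mulVec (hG : G.Valid) (j : Fin n) (m : Fin n → ℝ) :
    G.Psi j *ᵥ m = ∫ s in (0:ℝ)..G.T, MM G j s *ᵥ m := by
  have hint : IntervalIntegrable (fun s => MM G j s *ᵥ m) volume 0 G.T :=
    ((contMM G j).matrix_mulVec continuous_const).intervalIntegrable 0 G.T
  funext a
  rw [integral_apply' _ hint a]
  show (∑ b, (G.Psi j) a b * m b) = _
  have hentry : ∀ a b, (G.Psi j) a b = ∫ s in (0:ℝ)..G.T, MM G j s a b := by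
    intro a b; rfl
  have hintab : ∀ (a b : Fin n),
      IntervalIntegrable (fun s => MM G j s a b * m b) volume 0 G.T :=
    fun a b => ((((contMM G j).matrix_elem a b)).mul continuous_const).intervalIntegrable 0 G.T
  calc (∑ b, (G.Psi j) a b * m b)
      = ∑ b, ∫ s in (0:ℝ)..G.T, MM G j s a b * m b := by
        refine Finset.sum_congr rfl fun b _ => ?_
        rw [hentry, intervalIntegral.integral_mul_const]
    _ = ∫ s in (0:ℝ)..G.T, ∑ b, MM G j s a b * m b := by
        rw [intervalIntegral.integral_finset_sum fun b _ => hintab a b]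
    _ = ∫ s in (0:ℝ)..G.T, (MM G j s *ᵥ m) a := rfl

lemma traj_eq (hG : G.Valid) (x0 : Fin n → ℝ) (u : Fin n → ℝ → ℝ)
    (hu : G.NashStubF x0 x0 u) :
    G.Hhat *ᵥ G.ytraj x0 u G.T
      = (mexp (G.T • G.Λ)) *ᵥ x0 +
          ∑ j : Fin n, (G.Psi j) *ᵥ ((mexp (G.τ • G.Λᵀ)) *ᵥ ((G.W j) *ᵥ x0)) := by
  have hTnn : (0:ℝ) ≤ G.T := le_of_lt (hT_pos G hG)
  -- Step 1: each control integral
  have hstep1 : ∀ j : Fin n, (∫ s in (0:ℝ)..G.T, u j s • bb G j s)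
      = -(G.Psi j *ᵥ mv G x0 (G.ytraj x0 u G.T) j) := by
    intro j
    have hae := ae_formula G hG x0 u hu j
    have hae' : ∀ᵐ s ∂volume, s ∈ Set.uIoc (0:ℝ) G.T →
        u j s • bb G j s
          = (-(1 / G.r j) * (bb G j s ⬝ᵥ mv G x0 (G.ytraj x0 u G.T) j)) • bb G j s := by
      rw [Set.uIoc_of_le hTnn]
      have := (ae_restrict_iff' measurableSet_Ioc).mp hae
      filter_upwards [this] with s hs hmem
      rw [hs hmem]
    rw [intervalIntegral.integral_congr_ae hae']
    have : (fun s => (-(1 / G.r j) * (bb G j s ⬝ᵥ mv G x0 (G.ytraj x0 u G.T) j)) • bb G j s)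
        = fun s => (-(1 / G.r j)) •
            ((bb G j s ⬝ᵥ mv G x0 (G.ytraj x0 u G.T) j) • bb G j s) := by
      funext s; rw [smul_smul]
    rw [this, intervalIntegral.integral_smul, Psi_mulVec G hG j]
    rw [intervalIntegral.integral_congr
      (fun s _ => MM_mulVec G j s (mv G x0 (G.ytraj x0 u G.T) j)),
      intervalIntegral.integral_smul]
    rw [neg_smul]
  -- Step 2: y = exp x0 - ∑ Psi mv
  have hstep2 : G.ytraj x0 u G.T
      = (mexp (G.T • G.Λ)) *ᵥ x0
        - ∑ j : Fin n, G.Psi j *ᵥ mv G x0 (G.ytraj x0 u G.T) j := by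
    conv_lhs => rw [ytraj_eq]
    rw [intervalIntegral.integral_finset_sum
      (fun j _ => intInt_hbb G (u j) (hu.1 j) j 0 G.T)]
    rw [Finset.sum_congr rfl fun j _ => hstep1 j, Finset.sum_neg_distrib]
    abel
  -- Step 3
  have hMj : ∀ j : Fin n,
      (G.What j + ((1 - G.ω j) / G.d j) • G.Lhat j) *ᵥ G.ytraj x0 u G.T
        = mv G x0 (G.ytraj x0 u G.T) j + (mexp (G.τ • G.Λᵀ)) *ᵥ (G.W j *ᵥ x0) := by
    intro j
    rw [Matrix.add_mulVec, Matrix.smul_mulVec, GameData.What,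
      ← Matrix.mulVec_mulVec, ← Matrix.mulVec_mulVec, mv, mexp_transpose' G G.τ,
      Matrix.mulVec_sub]
    rw [Matrix.mulVec_sub]  -- maybe needed once
    abel
  rw [GameData.Hhat, Matrix.add_mulVec, Matrix.one_mulVec, sum_mulVec']
  rw [Finset.sum_congr rfl fun j _ => by
    rw [← Matrix.mulVec_mulVec, hMj j, Matrix.mulVec_add]]
  rw [Finset.sum_add_distrib, ← add_assoc, eq_sub_iff_add_eq.mp hstep2]
end Game6

/-- Uniqueness of the open-loop Nash equilibrium of the stubborn delay-free game when `Ĥ`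
is invertible: any two equilibria `u, v` from `y₀ = x₀` satisfy
`y_u(T) = y_v(T) = Ĥ⁻¹·(exp(TΛ)·x₀ + ∑ⱼ Ψⱼ·exp(τΛᵀ)·Wⱼ·x₀)` and `uᵢ = vᵢ` almost
everywhere on `[0,T]`. -/
theorem statement_17 {n : ℕ} (G : GameData n) (hG : G.Valid) (hH : IsUnit G.Hhat)
    (x0 : Fin n → ℝ) (u v : Fin n → ℝ → ℝ)
    (hu : G.NashStubF x0 x0 u) (hv : G.NashStubF x0 x0 v) :
    G.ytraj x0 u G.T = G.Hhat⁻¹.mulVec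
        ((mexp (G.T • G.Λ)).mulVec x0 +
          ∑ j : Fin n, (G.Psi j).mulVec ((mexp (G.τ • G.Λᵀ)).mulVec ((G.W j).mulVec x0))) ∧
      G.ytraj x0 v G.T = G.Hhat⁻¹.mulVec
        ((mexp (G.T • G.Λ)).mulVec x0 +
          ∑ j : Fin n, (G.Psi j).mulVec ((mexp (G.τ • G.Λᵀ)).mulVec ((G.W j).mulVec x0))) ∧
      ∀ i, ∀ᵐ t ∂(volume.restrict (Set.Icc (0:ℝ) G.T)), u i t = v i t := by
  have hdet := (Matrix.isUnit_iff_isUnit_det _).mp hH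
  have hu' := traj_eq G hG x0 u hu
  have hv' := traj_eq G hG x0 v hv
  have hyu : G.ytraj x0 u G.T = G.Hhat⁻¹.mulVec
      ((mexp (G.T • G.Λ)).mulVec x0 +
        ∑ j : Fin n, (G.Psi j).mulVec ((mexp (G.τ • G.Λᵀ)).mulVec ((G.W j).mulVec x0))) := by
    rw [← hu', Matrix.mulVec_mulVec, Matrix.nonsing_inv_mul _ hdet, Matrix.one_mulVec]
  have hyv : G.ytraj x0 v G.T = G.Hhat⁻¹.mulVec
      ((mexp (G.T • G.Λ)).mulVec x0 +
        ∑ j : Fin n, (G.Psi j).mulVec ((mexp (G.τ • G.Λᵀ)).mulVec ((G.W j).mulVec x0))) := by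
    rw [← hv', Matrix.mulVec_mulVec, Matrix.nonsing_inv_mul _ hdet, Matrix.one_mulVec]
  refine ⟨hyu, hyv, fun i => ?_⟩
  have h1 := ae_formula G hG x0 u hu i
  have h2 := ae_formula G hG x0 v hv i
  have hyy : G.ytraj x0 v G.T = G.ytraj x0 u G.T := by rw [hyu, hyv]
  rw [show volume.restrict (Set.Icc (0:ℝ) G.T) = volume.restrict (Set.Ioc (0:ℝ) G.T) from
    (Measure.restrict_congr_set MeasureTheory.Ioc_ae_eq_Icc).symm]
  filter_upwards [h1, h2] with t e1 e2
  rw [e1, e2, hyy]
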